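/- Let f_br, f_cr : [0,1] → ℝ be continuous and nonnegative, and let τ, ζ, ξ > 0. If (y, z) : [0, ∞) → ℝ² is a solution of the aNIMFA system dy/dt = −y + τ y(1−y)z, dz/dt = −ζ z f_br(y) + ξ (1−z) f_cr(y) with initial condition (y(0), z(0)) ∈ [0,1]², then (y(t), z(t)) ∈ [0,1]² for all t ≥ 0, i.e. the unit square [0,1]² is forward invariant. -/

import Mathlib

open Set

lemma key (f c g : ℝ → ℝ)
    (hc : ContinuousOn c (Set.Ici 0))
    (hg : ∀ t, 0 ≤ t → 0 ≤ g t)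
    (hf : ∀ t, 0 ≤ t → HasDerivAt f (-(c t) * f t + g t) t)
    (hf0 : 0 ≤ f 0) : ∀ T, 0 ≤ T → 0 ≤ f T := by
  intro T hT
  rcases eq_or_lt_of_le hT with h | hTpos
  · simpa [← h] using hf0
  set C : ℝ → ℝ := fun t => ∫ s in (0:ℝ)..t, c s with hC
  have hcIcc : ContinuousOn c (Set.Icc 0 T) := hc.mono Set.Icc_subset_Ici_self
  have hint : IntervalIntegrable c MeasureTheory.volume 0 T := by
    apply ContinuousOn.intervalIntegrable
    rwa [Set.uIcc_of_le hT]
  have hCc : ContinuousOn C (Set.Icc 0 T) := by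
    have h2 : MeasureTheory.IntegrableOn c (Set.uIcc 0 T) MeasureTheory.volume := by
      rw [Set.uIcc_of_le hT]; exact hcIcc.integrableOn_Icc
    have := intervalIntegral.continuousOn_primitive_interval (f := c)
      (μ := MeasureTheory.volume) (a := 0) (b := T) h2
    rw [Set.uIcc_of_le hT] at this
    exact this
  have hCd : ∀ x ∈ Set.Ioo (0:ℝ) T, HasDerivAt C (c x) x := by
    intro x hx
    have hint' : IntervalIntegrable c MeasureTheory.volume 0 x := by
      apply hint.mono_set
      rw [Set.uIcc_of_le hT, Set.uIcc_of_le hx.1.le]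
      exact Set.Icc_subset_Icc le_rfl hx.2.le
    have hca : ContinuousAt c x :=
      (hc x hx.1.le).continuousAt (Ici_mem_nhds hx.1)
    have hsm : StronglyMeasurableAtFilter c (nhds x) MeasureTheory.volume :=
      ContinuousOn.stronglyMeasurableAtFilter isOpen_Ioi (hc.mono Set.Ioi_subset_Ici_self) x hx.1
    exact intervalIntegral.integral_hasDerivAt_right hint' hsm hca
  set h : ℝ → ℝ := fun t => f t * Real.exp (C t) with hh
  have hfc : ContinuousOn f (Set.Icc 0 T) := fun x hx =>
    ((hf x hx.1).continuousAt).continuousWithinAt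
  have hhc : ContinuousOn h (Set.Icc 0 T) := hfc.mul (Real.continuous_exp.comp_continuousOn hCc)
  have hhd : ∀ x ∈ interior (Set.Icc (0:ℝ) T), HasDerivAt h (g x * Real.exp (C x)) x := by
    intro x hx
    rw [interior_Icc] at hx
    have h1 := (hf x hx.1.le).mul ((hCd x hx).exp)
    refine h1.congr_deriv ?_
    ring
  have hmono : MonotoneOn h (Set.Icc 0 T) := by
    apply monotoneOn_of_deriv_nonneg (convex_Icc 0 T) hhc
    · intro x hx
      exact ((hhd x hx).differentiableAt).differentiableWithinAt
    · intro x hx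
      rw [(hhd x hx).deriv]
      rw [interior_Icc] at hx
      have := hg x hx.1.le
      positivity
  have h0T : h 0 ≤ h T :=
    hmono (Set.left_mem_Icc.2 hT) (Set.right_mem_Icc.2 hT) hT
  have hC0 : C 0 = 0 := by simp [hC]
  have h0 : h 0 = f 0 := by simp [hh, hC0]
  have : 0 ≤ f T * Real.exp (C T) := by
    have : (0:ℝ) ≤ h T := le_trans (h0 ▸ hf0) h0T
    simpa [hh] using this
  nlinarith [Real.exp_pos (C T)]

/-- Forward invariance of the unit square for the aNIMFA system
    dy/dt = −y + τ y(1−y)z, dz/dt = −ζ z f_br(y) + ξ (1−z) f_cr(y). -/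
theorem stmt_0 (fbr fcr : ℝ → ℝ)
    (hbrC : ContinuousOn fbr (Set.Icc 0 1)) (hcrC : ContinuousOn fcr (Set.Icc 0 1))
    (hbr : ∀ y ∈ Set.Icc (0:ℝ) 1, 0 ≤ fbr y) (hcr : ∀ y ∈ Set.Icc (0:ℝ) 1, 0 ≤ fcr y)
    (τ ζ ξ : ℝ) (hτ : 0 < τ) (hζ : 0 < ζ) (hξ : 0 < ξ)
    (y z : ℝ → ℝ)
    (hy : ∀ t : ℝ, 0 ≤ t → HasDerivAt y (-(y t) + τ * y t * (1 - y t) * z t) t)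
    (hz : ∀ t : ℝ, 0 ≤ t →
      HasDerivAt z (-(ζ * z t * fbr (y t)) + ξ * (1 - z t) * fcr (y t)) t)
    (hy0 : y 0 ∈ Set.Icc (0:ℝ) 1) (hz0 : z 0 ∈ Set.Icc (0:ℝ) 1) :
    ∀ t : ℝ, 0 ≤ t → y t ∈ Set.Icc (0:ℝ) 1 ∧ z t ∈ Set.Icc (0:ℝ) 1 := by
  have ycont : ContinuousOn y (Set.Ici 0) := fun t ht =>
    ((hy t ht).continuousAt).continuousWithinAt
  have zcont : ContinuousOn z (Set.Ici 0) := fun t ht =>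
    ((hz t ht).continuousAt).continuousWithinAt
  -- Step 1: y ≥ 0
  have hy_nonneg : ∀ t, 0 ≤ t → 0 ≤ y t := by
    apply key y (fun t => 1 - τ * (1 - y t) * z t) (fun _ => 0)
    · exact (continuousOn_const.sub ((continuousOn_const.mul
        (continuousOn_const.sub ycont)).mul zcont))
    · intro t _; exact le_rfl
    · intro t ht
      convert hy t ht using 1
      ring
    · exact hy0.1
  -- Step 2: y ≤ 1
  have hy_le : ∀ t, 0 ≤ t → y t ≤ 1 := by
    have h1 : ∀ t, 0 ≤ t → 0 ≤ 1 - y t := by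
      apply key (fun t => 1 - y t) (fun t => τ * y t * z t) y
      · exact (continuousOn_const.mul ycont).mul zcont
      · exact hy_nonneg
      · intro t ht
        have := (hasDerivAt_const t (1:ℝ)).sub (hy t ht)
        refine this.congr_deriv ?_
        ring
      · linarith [hy0.2]
    intro t ht
    linarith [h1 t ht]
  have ymem : ∀ t, 0 ≤ t → y t ∈ Set.Icc (0:ℝ) 1 := fun t ht =>
    ⟨hy_nonneg t ht, hy_le t ht⟩
  have ymaps : Set.MapsTo y (Set.Ici 0) (Set.Icc 0 1) := fun t ht => ymem t ht
  have hbry : ContinuousOn (fun t => fbr (y t)) (Set.Ici 0) := hbrC.comp ycont ymaps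
  have hcry : ContinuousOn (fun t => fcr (y t)) (Set.Ici 0) := hcrC.comp ycont ymaps
  -- Step 3: z ≥ 0
  have hz_nonneg : ∀ t, 0 ≤ t → 0 ≤ z t := by
    apply key z (fun t => ζ * fbr (y t) + ξ * fcr (y t)) (fun t => ξ * fcr (y t))
    · exact (continuousOn_const.mul hbry).add (continuousOn_const.mul hcry)
    · intro t ht
      exact mul_nonneg hξ.le (hcr _ (ymem t ht))
    · intro t ht
      convert hz t ht using 1
      ring
    · exact hz0.1
  -- Step 4: z ≤ 1
  have hz_le : ∀ t, 0 ≤ t → z t ≤ 1 := by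
    have h1 : ∀ t, 0 ≤ t → 0 ≤ 1 - z t := by
      apply key (fun t => 1 - z t) (fun t => ξ * fcr (y t))
        (fun t => ζ * z t * fbr (y t))
      · exact continuousOn_const.mul hcry
      · intro t ht
        exact mul_nonneg (mul_nonneg hζ.le (hz_nonneg t ht)) (hbr _ (ymem t ht))
      · intro t ht
        have := (hasDerivAt_const t (1:ℝ)).sub (hz t ht)
        refine this.congr_deriv ?_
        ring
      · linarith [hz0.2]
    intro t ht
    linarith [h1 t ht]
  intro t ht
  exact ⟨ymem t ht, ⟨hz_nonneg t ht, hz_le t ht⟩⟩
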